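/- arXiv:1505.00036 — 6 statements merged into one kernel-verified Lean document; each statement's English description precedes it below -/
import Mathlib

section
/- Let φ be an influence measure on full-domain rational-valued datasets that satisfies the symmetry axiom (Sym), the dummy axiom (D), and the additivity axiom (AD). Then φ is identically zero: for every dataset G = ⟨N, A, v⟩ and every feature i ∈ N, φ_i(G) = 0. -/
/-- Any influence measure on full-domain rational-valued datasets
satisfying symmetry (state symmetry and feature symmetry), the dummy axiom and
additivity is identically zero. -/
theorem influence_sym_dummy_additive_is_zero
    {ι : Type*} [Fintype ι] [DecidableEq ι]
    {A : ι → Type*} [∀ i, Fintype (A i)] [∀ i, Nonempty (A i)]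
    (φ : ((∀ i, A i) → ℚ) → ι → ℝ)
    -- Dummy axiom (D)
    (hD : ∀ (v : (∀ i, A i) → ℚ) (i : ι),
      (∀ (a : ∀ i, A i) (b : A i), v (Function.update a i b) = v a) → φ v i = 0)
    -- State symmetry (part of Sym)
    (hSymState : ∀ (v : (∀ i, A i) → ℚ) (i : ι) (τ : A i ≃ A i) (j : ι),
      φ (fun a => v (Function.update a i (τ (a i)))) j = φ v j)
    -- Feature symmetry (part of Sym)
    (hSymFeat : ∀ (v : (∀ i, A i) → ℚ) (σ : ι ≃ ι) (h : ∀ i, A (σ i) = A i) (i : ι),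
      φ (fun a => v (fun i => cast (h i) (a (σ i)))) (σ i) = φ v i)
    -- Additivity (AD)
    (hAdd : ∀ (v₁ v₂ : (∀ i, A i) → ℚ) (i : ι),
      φ (fun a => v₁ a + v₂ a) i = φ v₁ i + φ v₂ i) :
    ∀ (v : (∀ i, A i) → ℚ) (i : ι), φ v i = 0 := by
  intro v i
  classical
  have hzero : φ (fun _ => (0:ℚ)) i = 0 := hD _ i (fun _ _ => rfl)
  have hsum : ∀ (s : Finset (Equiv.Perm (A i))) (f : Equiv.Perm (A i) → (∀ j, A j) → ℚ),
      φ (fun a => ∑ τ ∈ s, f τ a) i = ∑ τ ∈ s, φ (f τ) i := by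
    intro s f
    induction s using Finset.induction with
    | empty => simpa using hzero
    | insert x s hx ih =>
      simp only [Finset.sum_insert hx]
      rw [hAdd, ih]
  set w : (∀ j, A j) → ℚ :=
    fun a => ∑ τ : Equiv.Perm (A i), v (Function.update a i (τ (a i))) with hw
  have hdummy : ∀ (a : ∀ j, A j) (b : A i), w (Function.update a i b) = w a := by
    intro a b
    simp only [hw]
    have h1 : ∀ (c : A i) (τ : Equiv.Perm (A i)),
        Function.update (Function.update a i c) i (τ (Function.update a i c i))
          = Function.update a i (τ c) := by
      intro c τ
      simp
    calc ∑ τ : Equiv.Perm (A i),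
          v (Function.update (Function.update a i b) i (τ (Function.update a i b i)))
        = ∑ τ : Equiv.Perm (A i), v (Function.update a i (τ b)) := by
          simp only [h1]
      _ = ∑ τ : Equiv.Perm (A i), v (Function.update a i (τ (a i))) := by
          apply Fintype.sum_equiv (Equiv.mulRight (Equiv.swap b (a i)))
          intro τ
          simp [Equiv.Perm.mul_apply]
  have h2 : φ w i = (Fintype.card (Equiv.Perm (A i)) : ℝ) * φ v i := by
    rw [hw, hsum Finset.univ (fun τ a => v (Function.update a i (τ (a i))))]
    have : ∀ τ : Equiv.Perm (A i),
        φ (fun a => v (Function.update a i (τ (a i)))) i = φ v i :=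
      fun τ => hSymState v i τ i
    rw [Finset.sum_congr rfl (fun τ _ => this τ), Finset.sum_const, nsmul_eq_mul]
    rfl
  have h3 : φ w i = 0 := hD w i hdummy
  have hcard : (0:ℝ) < (Fintype.card (Equiv.Perm (A i)) : ℝ) := by
    exact_mod_cast Fintype.card_pos
  have := h3 ▸ h2
  nlinarith [this]
end

section
/- The influence measure χ satisfies the dummy axiom (D), the symmetry axiom (Sym), and the disjoint union axiom (DU). -/
/-- The influence measure χ: the number of pairs (a, b) with a winning and the
i-modified profile losing, plus the number of pairs with a losing and the
i-modified profile winning. -/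
def chiMeasure {ι : Type*} [Fintype ι] [DecidableEq ι]
    {A : ι → Type*} [∀ i, Fintype (A i)] [∀ i, DecidableEq (A i)]
    (i : ι) (W L : Finset (∀ j, A j)) : ℕ :=
  ((W ×ˢ (Finset.univ : Finset (A i))).filter
      fun p => Function.update p.1 i p.2 ∈ L).card
  + ((L ×ˢ (Finset.univ : Finset (A i))).filter
      fun p => Function.update p.1 i p.2 ∈ W).card

/-- Relabeling of a profile by a feature permutation σ with `A (σ i) = A i`. -/
def relabelProfile {ι : Type*} {A : ι → Type*}
    (σ : ι ≃ ι) (h : ∀ i, A (σ i) = A i) (a : ∀ j, A j) : ∀ k, A k :=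
  fun k =>
    cast ((h (σ.symm k)).symm.trans (congrArg A (σ.apply_symm_apply k)))
      (a (σ.symm k))

set_option linter.unusedSectionVars false

section ChiAux
variable {ι : Type*} [Fintype ι] [DecidableEq ι]
  {A : ι → Type*} [∀ i, Fintype (A i)] [∀ i, DecidableEq (A i)]

lemma chiAux_mem_image (e : (∀ j, A j) ≃ (∀ j, A j)) (S : Finset (∀ j, A j))
    (x : ∀ j, A j) : x ∈ S.image e ↔ e.symm x ∈ S := by
  simp only [Finset.mem_image]
  constructor
  · rintro ⟨c, hcS, rfl⟩; simpa using hcS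
  · intro hx; exact ⟨e.symm x, hx, e.apply_symm_apply x⟩

lemma chiAux_count_image (e : (∀ j, A j) ≃ (∀ j, A j)) {i i' : ι} (f : A i ≃ A i')
    (hc : ∀ a b, e (Function.update a i b) = Function.update (e a) i' (f b))
    (W L : Finset (∀ j, A j)) :
    (((W.image e) ×ˢ (Finset.univ : Finset (A i'))).filter
        fun p => Function.update p.1 i' p.2 ∈ L.image e).card
      = ((W ×ˢ (Finset.univ : Finset (A i))).filter
        fun p => Function.update p.1 i p.2 ∈ L).card := by
  refine Finset.card_nbij' (fun p => (e.symm p.1, f.symm p.2)) (fun p => (e p.1, f p.2))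
    ?_ ?_ ?_ ?_
  · rintro ⟨a, b⟩ hp
    simp only [Finset.mem_coe, Finset.mem_filter, Finset.mem_product, Finset.mem_univ, and_true,
      chiAux_mem_image] at hp ⊢
    refine ⟨hp.1, ?_⟩
    have h2 := hp.2
    have h3 : e (Function.update (e.symm a) i (f.symm b)) = Function.update a i' b := by
      rw [hc]; simp
    rw [← h3, Equiv.symm_apply_apply] at h2
    exact h2
  · rintro ⟨a, b⟩ hp
    simp only [Finset.mem_coe, Finset.mem_filter, Finset.mem_product, Finset.mem_univ, and_true,
      chiAux_mem_image] at hp ⊢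
    refine ⟨by simpa using hp.1, ?_⟩
    rw [← hc, Equiv.symm_apply_apply]
    exact hp.2
  · rintro ⟨a, b⟩ _; simp
  · rintro ⟨a, b⟩ _; simp

lemma chiAux_image (e : (∀ j, A j) ≃ (∀ j, A j)) {i i' : ι} (f : A i ≃ A i')
    (hc : ∀ a b, e (Function.update a i b) = Function.update (e a) i' (f b))
    (W L : Finset (∀ j, A j)) :
    chiMeasure i' (W.image e) (L.image e) = chiMeasure i W L := by
  unfold chiMeasure
  rw [chiAux_count_image e f hc W L, chiAux_count_image e f hc L W]

def chiStateEquiv (i : ι) (τ : A i ≃ A i) : (∀ j, A j) ≃ (∀ j, A j) where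
  toFun a := Function.update a i (τ (a i))
  invFun a := Function.update a i (τ.symm (a i))
  left_inv a := by
    simp [Function.update_idem, Function.update_self, Function.update_eq_self]
  right_inv a := by
    simp [Function.update_idem, Function.update_self, Function.update_eq_self]

lemma chiStateEquiv_comm_self (i : ι) (τ : A i ≃ A i) (a : ∀ j, A j) (b : A i) :
    chiStateEquiv i τ (Function.update a i b)
      = Function.update (chiStateEquiv i τ a) i (τ b) := by
  simp [chiStateEquiv, Function.update_idem]

lemma chiStateEquiv_comm_ne (i : ι) (τ : A i ≃ A i) {j : ι} (hji : j ≠ i)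
    (a : ∀ j, A j) (b : A j) :
    chiStateEquiv i τ (Function.update a j b)
      = Function.update (chiStateEquiv i τ a) j b := by
  simp only [chiStateEquiv, Equiv.coe_fn_mk, Function.update_of_ne (Ne.symm hji)]
  rw [Function.update_comm hji]

def chiRelabelEquiv (σ : ι ≃ ι) (h : ∀ i, A (σ i) = A i) : (∀ j, A j) ≃ (∀ k, A k) :=
  (Equiv.piCongrLeft' A σ).trans (Equiv.piCongrRight fun k =>
    Equiv.cast ((h (σ.symm k)).symm.trans (congrArg A (σ.apply_symm_apply k))))

lemma chiRelabelEquiv_eq (σ : ι ≃ ι) (h : ∀ i, A (σ i) = A i) :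
    ⇑(chiRelabelEquiv σ h) = relabelProfile σ h := rfl

lemma chiRelabel_comm (σ : ι ≃ ι) (h : ∀ i, A (σ i) = A i) (i : ι)
    (a : ∀ j, A j) (b : A i) :
    chiRelabelEquiv σ h (Function.update a i b)
      = Function.update (chiRelabelEquiv σ h a) (σ i) ((Equiv.cast (h i)).symm b) := by
  have key : ∀ (x : ∀ j, A j), HEq (x (σ.symm (σ i))) (x i) := fun x => by
    rw [σ.symm_apply_apply]
  funext k
  by_cases hk : k = σ i
  · subst hk
    rw [Function.update_self]
    show cast _ ((Function.update a i b) (σ.symm (σ i))) = _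
    rw [cast_eq_iff_heq]
    refine (key _).trans ?_
    rw [Function.update_self]
    show HEq b ((Equiv.cast (h i)).symm b)
    rw [← Equiv.cast_symm, Equiv.cast_apply]
    exact (cast_heq _ b).symm
  · rw [Function.update_of_ne hk]
    have hne : σ.symm k ≠ i := fun hc => hk (by rw [← hc, σ.apply_symm_apply])
    show cast _ ((Function.update a i b) (σ.symm k)) = _
    rw [Function.update_of_ne hne]
    rfl

end ChiAux

/-- χ satisfies the dummy axiom (D), the symmetry axiom (Sym:
state symmetry and feature symmetry) and the disjoint union axiom (DU). -/
theorem chi_satisfies_dummy_symmetry_disjoint_union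
    {ι : Type*} [Fintype ι] [DecidableEq ι]
    {A : ι → Type*} [∀ i, Fintype (A i)] [∀ i, DecidableEq (A i)]
    [∀ i, Nonempty (A i)] :
    -- Dummy axiom (D)
    ((∀ (W L : Finset (∀ j, A j)), Disjoint W L → ∀ i : ι,
        (∀ a ∈ W, ∀ b : A i, Function.update a i b ∉ L) →
        (∀ a ∈ L, ∀ b : A i, Function.update a i b ∉ W) →
        chiMeasure i W L = 0)
     ∧
     -- State symmetry (part of Sym)
     (∀ (W L : Finset (∀ j, A j)), Disjoint W L → ∀ (i : ι) (τ : A i ≃ A i) (j : ι),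
        chiMeasure j (W.image fun a => Function.update a i (τ (a i)))
          (L.image fun a => Function.update a i (τ (a i))) = chiMeasure j W L)
     ∧
     -- Feature symmetry (part of Sym)
     (∀ (W L : Finset (∀ j, A j)), Disjoint W L →
        ∀ (σ : ι ≃ ι) (h : ∀ i, A (σ i) = A i) (i : ι),
        chiMeasure (σ i) (W.image (relabelProfile σ h)) (L.image (relabelProfile σ h))
          = chiMeasure i W L)
     ∧
     -- Disjoint union (DU)
     (∀ (Q R R' : Finset (∀ j, A j)),
        Disjoint Q R → Disjoint Q R' → Disjoint R R' → ∀ i : ι,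
        (chiMeasure i Q R + chiMeasure i Q R' = chiMeasure i Q (R ∪ R')) ∧
        (chiMeasure i R Q + chiMeasure i R' Q = chiMeasure i (R ∪ R') Q))) := by
  refine ⟨?_, ?_, ?_, ?_⟩
  · -- Dummy
    intro W L _ i h1 h2
    simp only [chiMeasure, Nat.add_eq_zero, Finset.card_eq_zero,
      Finset.filter_eq_empty_iff]
    constructor
    · rintro ⟨a, b⟩ hab
      simp only [Finset.mem_product, Finset.mem_univ, and_true] at hab
      exact h1 a hab b
    · rintro ⟨a, b⟩ hab
      simp only [Finset.mem_product, Finset.mem_univ, and_true] at hab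
      exact h2 a hab b
  · -- State symmetry
    intro W L _ i τ j
    by_cases hji : j = i
    · subst hji
      have := chiAux_image (chiStateEquiv j τ) τ (chiStateEquiv_comm_self j τ) W L
      simpa [chiStateEquiv] using this
    · have := chiAux_image (chiStateEquiv i τ) (Equiv.refl (A j))
        (chiStateEquiv_comm_ne i τ hji) W L
      simpa [chiStateEquiv] using this
  · -- Feature symmetry
    intro W L _ σ h i
    have := chiAux_image (chiRelabelEquiv σ h) (Equiv.cast (h i)).symm
      (chiRelabel_comm σ h i) W L
    simpa [chiRelabelEquiv_eq] using this
  · -- Disjoint union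
    intro Q R R' _ _ hRR' i
    constructor
    · unfold chiMeasure
      have h1 : ((Q ×ˢ (Finset.univ : Finset (A i))).filter
            fun p => Function.update p.1 i p.2 ∈ R ∪ R').card
          = ((Q ×ˢ (Finset.univ : Finset (A i))).filter
              fun p => Function.update p.1 i p.2 ∈ R).card
            + ((Q ×ˢ (Finset.univ : Finset (A i))).filter
              fun p => Function.update p.1 i p.2 ∈ R').card := by
        rw [← Finset.card_union_of_disjoint, ← Finset.filter_or]
        · simp only [Finset.mem_union]
        · rw [Finset.disjoint_filter]
          intro p _ hpR hpR'
          exact (Finset.disjoint_left.mp hRR') hpR hpR'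
      have h2 : (((R ∪ R') ×ˢ (Finset.univ : Finset (A i))).filter
            fun p => Function.update p.1 i p.2 ∈ Q).card
          = ((R ×ˢ (Finset.univ : Finset (A i))).filter
              fun p => Function.update p.1 i p.2 ∈ Q).card
            + ((R' ×ˢ (Finset.univ : Finset (A i))).filter
              fun p => Function.update p.1 i p.2 ∈ Q).card := by
        rw [Finset.union_product, Finset.filter_union, Finset.card_union_of_disjoint]
        exact Finset.disjoint_filter_filter
          (Finset.disjoint_product.mpr (Or.inl hRR'))
      rw [h1, h2]; ring
    · unfold chiMeasure
      have h1 : ((Q ×ˢ (Finset.univ : Finset (A i))).filter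
            fun p => Function.update p.1 i p.2 ∈ R ∪ R').card
          = ((Q ×ˢ (Finset.univ : Finset (A i))).filter
              fun p => Function.update p.1 i p.2 ∈ R).card
            + ((Q ×ˢ (Finset.univ : Finset (A i))).filter
              fun p => Function.update p.1 i p.2 ∈ R').card := by
        rw [← Finset.card_union_of_disjoint, ← Finset.filter_or]
        · simp only [Finset.mem_union]
        · rw [Finset.disjoint_filter]
          intro p _ hpR hpR'
          exact (Finset.disjoint_left.mp hRR') hpR hpR'
      have h2 : (((R ∪ R') ×ˢ (Finset.univ : Finset (A i))).filter
            fun p => Function.update p.1 i p.2 ∈ Q).card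
          = ((R ×ˢ (Finset.univ : Finset (A i))).filter
              fun p => Function.update p.1 i p.2 ∈ Q).card
            + ((R' ×ˢ (Finset.univ : Finset (A i))).filter
              fun p => Function.update p.1 i p.2 ∈ Q).card := by
        rw [Finset.union_product, Finset.filter_union, Finset.card_union_of_disjoint]
        exact Finset.disjoint_filter_filter
          (Finset.disjoint_product.mpr (Or.inl hRR'))
      rw [h1, h2]; ring
end

section
/- For every binary classifier v : A → {0,1} and every feature i ∈ N, the sum over partial profiles of the product of the number of winning and losing completions equals half the total influence count: ∑_{a_{-i} ∈ A_{-i}} |W_i(a_{-i})| · |L_i(a_{-i})| = (1/2) · ∑_{a ∈ A} ∑_{b ∈ A_i} |v(a_{-i}, b) − v(a)|. -/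
/-- Combine a partial profile (omitting feature i) with a state b of feature i
into a full profile. -/
def combineProfile {ι : Type*} [DecidableEq ι] {A : ι → Type*}
    (i : ι) (f : ∀ j : {j : ι // j ≠ i}, A j.1) (b : A i) : ∀ k, A k :=
  fun k => if h : k = i then cast (congrArg A h).symm b else f ⟨k, h⟩

lemma combine_eq_symm {ι : Type*} [DecidableEq ι] {A : ι → Type*}
    (i : ι) (f : ∀ j : {j : ι // j ≠ i}, A j.1) (b : A i) :
    (Equiv.piSplitAt i A).symm (b, f) = combineProfile i f b := by
  funext k
  by_cases h : k = i
  · subst h; simp [combineProfile, Equiv.piSplitAt]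
  · simp [combineProfile, Equiv.piSplitAt, h]

lemma update_combine {ι : Type*} [DecidableEq ι] {A : ι → Type*}
    (i : ι) (f : ∀ j : {j : ι // j ≠ i}, A j.1) (b c : A i) :
    Function.update (combineProfile i f c) i b = combineProfile i f b := by
  funext k
  by_cases h : k = i
  · subst h; simp [combineProfile, Function.update]
  · simp [combineProfile, Function.update, h]

lemma abs_sub_fin2 (x y : Fin 2) :
    |((x : ℕ) : ℝ) - ((y : ℕ) : ℝ)| = if (x = 1) = (y = 1) then 0 else 1 := by
  fin_cases x <;> fin_cases y <;> norm_num

lemma key_count {α : Type*} [Fintype α] [DecidableEq α] (P : α → Prop) [DecidablePred P] :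
    ∑ c : α, ∑ b : α, (if (P b) = (P c) then (0:ℝ) else 1)
      = 2 * ((Finset.univ.filter P).card * (Finset.univ.filter fun b => ¬ P b).card) := by
  rw [← Finset.sum_filter_add_sum_filter_not Finset.univ P]
  have h1 : ∀ c ∈ Finset.univ.filter P,
      ∑ b : α, (if (P b) = (P c) then (0:ℝ) else 1)
        = ((Finset.univ.filter fun b => ¬ P b).card : ℝ) := by
    intro c hc
    simp only [Finset.mem_filter] at hc
    have : ∀ b, (if (P b) = (P c) then (0:ℝ) else 1) = if ¬ P b then 1 else 0 := by
      intro b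
      by_cases hb : P b <;> simp [hb, hc.2]
    simp only [this]
    rw [Finset.sum_boole]
  have h2 : ∀ c ∈ Finset.univ.filter (fun c => ¬ P c),
      ∑ b : α, (if (P b) = (P c) then (0:ℝ) else 1)
        = ((Finset.univ.filter P).card : ℝ) := by
    intro c hc
    simp only [Finset.mem_filter] at hc
    have : ∀ b, (if (P b) = (P c) then (0:ℝ) else 1) = if P b then 1 else 0 := by
      intro b
      by_cases hb : P b <;> simp [hb, hc.2]
    simp only [this]
    rw [Finset.sum_boole]
  rw [Finset.sum_congr rfl h1, Finset.sum_congr rfl h2]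
  simp [Finset.sum_const]
  ring

/-- For a binary classifier v and feature i, the sum over partial
profiles of the product of the number of winning and losing completions equals
half the total influence count. -/
theorem win_loss_product_eq_half_influence
    {ι : Type*} [Fintype ι] [DecidableEq ι]
    {A : ι → Type*} [∀ i, Fintype (A i)] [∀ i, DecidableEq (A i)]
    [∀ i, Nonempty (A i)]
    (v : (∀ j, A j) → Fin 2) (i : ι) :
    ∑ f : (∀ j : {j : ι // j ≠ i}, A j.1),
      (((Finset.univ.filter fun b : A i => v (combineProfile i f b) = 1).card : ℝ)
        * ((Finset.univ.filter fun b : A i => ¬ v (combineProfile i f b) = 1).card : ℝ))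
      = (1 / 2) * ∑ a : ∀ j, A j, ∑ b : A i,
          |(((v (Function.update a i b) : ℕ)) : ℝ) - ((v a : ℕ) : ℝ)| := by
  have hsum : (∑ a : ∀ j, A j, ∑ b : A i,
        |(((v (Function.update a i b) : ℕ)) : ℝ) - ((v a : ℕ) : ℝ)|)
      = ∑ f : (∀ j : {j : ι // j ≠ i}, A j.1), ∑ c : A i, ∑ b : A i,
          |((v (combineProfile i f b) : ℕ) : ℝ) - ((v (combineProfile i f c) : ℕ) : ℝ)| := by
    rw [← Equiv.sum_comp (Equiv.piSplitAt i A).symm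
      (fun a => ∑ b : A i, |(((v (Function.update a i b) : ℕ)) : ℝ) - ((v a : ℕ) : ℝ)|)]
    rw [Fintype.sum_prod_type, Finset.sum_comm]
    refine Finset.sum_congr rfl fun f _ => Finset.sum_congr rfl fun c _ =>
      Finset.sum_congr rfl fun b _ => ?_
    rw [combine_eq_symm, update_combine]
  rw [hsum]
  have main : ∀ f : (∀ j : {j : ι // j ≠ i}, A j.1),
      (∑ c : A i, ∑ b : A i,
          |((v (combineProfile i f b) : ℕ) : ℝ) - ((v (combineProfile i f c) : ℕ) : ℝ)|)
        = 2 * (((Finset.univ.filter fun b : A i => v (combineProfile i f b) = 1).card : ℝ)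
            * ((Finset.univ.filter fun b : A i => ¬ v (combineProfile i f b) = 1).card : ℝ)) := by
    intro f
    simp only [abs_sub_fin2]
    exact key_count _
  rw [Finset.sum_congr rfl fun f _ => main f, Finset.mul_sum]
  refine Finset.sum_congr rfl fun f _ => ?_
  ring
end

section
/- Let v be the non-degenerate linear classifier on [0,1]^n defined by weights w and threshold q, where non-degeneracy means ∑_{k : w_k < 0} w_k < q < ∑_{k : w_k > 0} w_k (so that both classes have positive measure). Then for all features i, j: χ_i ≥ χ_j if and only if |w_i| ≥ |w_j|. -/
open MeasureTheory

/-- The linear classifier on ℝ^n with weights w and threshold q. -/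
noncomputable def linClass {n : ℕ} (w : Fin n → ℝ) (q : ℝ) (x : Fin n → ℝ) : ℝ :=
  if q ≤ ∑ k, w k * x k then 1 else 0

/-- The unit cube [0,1]^n. -/
def unitCube (n : ℕ) : Set (Fin n → ℝ) := Set.univ.pi fun _ => Set.Icc 0 1

/-- The influence χ_i = ∫_0^1 ∫_{[0,1]^n} |v(x_{-i}, b) − v(x)| dx db. -/
noncomputable def chiLin {n : ℕ} (w : Fin n → ℝ) (q : ℝ) (i : Fin n) : ℝ :=
  ∫ b in Set.Icc (0 : ℝ) 1,
    ∫ x in unitCube n, |linClass w q (Function.update x i b) - linClass w q x|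


noncomputable def clamp (u : ℝ) : ℝ := max 0 (min 1 u)
noncomputable def Gfun (u : ℝ) : ℝ := clamp u * clamp (1 - u)
noncomputable def Ghat (x : ℝ) : ℝ := ∫ u in (0:ℝ)..x, Gfun u
noncomputable def Hfun (a b c : ℝ) : ℝ := ∫ y in (0:ℝ)..(1:ℝ), Gfun ((c - b*y)/a)

lemma clamp_nonneg (u : ℝ) : 0 ≤ clamp u := le_max_left _ _
lemma clamp_le_one (u : ℝ) : clamp u ≤ 1 := max_le zero_le_one (min_le_left _ _)
lemma continuous_clamp : Continuous clamp := continuous_const.max (continuous_const.min continuous_id)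
lemma continuous_Gfun : Continuous Gfun :=
  (continuous_clamp).mul (continuous_clamp.comp (continuous_const.sub continuous_id))

lemma Gfun_nonneg (u : ℝ) : 0 ≤ Gfun u := mul_nonneg (clamp_nonneg _) (clamp_nonneg _)

lemma clamp_of_nonpos {u : ℝ} (h : u ≤ 0) : clamp u = 0 := by
  simp [clamp, max_eq_left, min_le_of_right_le h, h, le_trans h zero_le_one]
  
lemma clamp_of_mem {u : ℝ} (h0 : 0 ≤ u) (h1 : u ≤ 1) : clamp u = u := by
  simp [clamp, min_eq_right h1, max_eq_right h0]

lemma Gfun_of_nonpos {u : ℝ} (h : u ≤ 0) : Gfun u = 0 := by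
  simp [Gfun, clamp_of_nonpos h]

lemma Gfun_of_ge_one {u : ℝ} (h : 1 ≤ u) : Gfun u = 0 := by
  simp [Gfun, clamp_of_nonpos (by linarith : 1 - u ≤ 0)]

lemma Gfun_of_mem {u : ℝ} (h0 : 0 ≤ u) (h1 : u ≤ 1) : Gfun u = u * (1 - u) := by
  rw [Gfun, clamp_of_mem h0 h1, clamp_of_mem (by linarith) (by linarith)]

lemma Gfun_symm (u : ℝ) : Gfun (1 - u) = Gfun u := by
  simp [Gfun, sub_sub_cancel, mul_comm]

lemma Ghat_of_nonpos {x : ℝ} (h : x ≤ 0) : Ghat x = 0 := by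
  rw [Ghat]
  rw [intervalIntegral.integral_congr (g := fun _ => (0:ℝ)) ?_]
  · simp
  · intro u hu
    rw [Set.uIcc_of_ge h] at hu
    exact Gfun_of_nonpos hu.2

lemma Ghat_of_mem {x : ℝ} (h0 : 0 ≤ x) (h1 : x ≤ 1) : Ghat x = x^2/2 - x^3/3 := by
  rw [Ghat]
  rw [intervalIntegral.integral_congr (g := fun u => u - u^2) ?_]
  · rw [intervalIntegral.integral_sub (intervalIntegral.intervalIntegrable_id)
      (intervalIntegral.intervalIntegrable_pow 2)]
    simp [integral_id, integral_pow]
    ring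
  · intro u hu
    rw [Set.uIcc_of_le h0] at hu
    rw [Gfun_of_mem hu.1 (le_trans hu.2 h1)]
    ring

lemma Ghat_one : Ghat 1 = 1/6 := by
  rw [Ghat_of_mem zero_le_one le_rfl]; norm_num

lemma Ghat_of_ge_one {x : ℝ} (h : 1 ≤ x) : Ghat x = 1/6 := by
  have h1 : IntervalIntegrable Gfun volume 0 1 := continuous_Gfun.intervalIntegrable _ _
  have h2 : IntervalIntegrable Gfun volume 1 x := continuous_Gfun.intervalIntegrable _ _
  have := intervalIntegral.integral_add_adjacent_intervals h1 h2
  have hz : (∫ u in (1:ℝ)..x, Gfun u) = 0 := by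
    rw [intervalIntegral.integral_congr (g := fun _ => (0:ℝ)) ?_]
    · simp
    · intro u hu
      rw [Set.uIcc_of_le h] at hu
      exact Gfun_of_ge_one hu.1
  rw [Ghat, ← this, hz, add_zero, ← Ghat, Ghat_one]

lemma continuous_Ghat : Continuous Ghat :=
  intervalIntegral.continuous_primitive (fun _ _ => continuous_Gfun.intervalIntegrable _ _) 0

lemma integral_Gfun (A B : ℝ) : (∫ u in A..B, Gfun u) = Ghat B - Ghat A := by
  rw [Ghat, Ghat, ← intervalIntegral.integral_interval_sub_left
    (continuous_Gfun.intervalIntegrable _ _) (continuous_Gfun.intervalIntegrable _ _)]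

lemma Hfun_eq (a : ℝ) {b : ℝ} (hb : b ≠ 0) (c : ℝ) :
    Hfun a b c = (a/b) * (Ghat (c/a) - Ghat ((c-b)/a)) := by
  rcases eq_or_ne a 0 with rfl | ha
  · simp [Hfun, Gfun_of_nonpos (le_refl 0)]
  · have h : ∀ y : ℝ, (c - b*y)/a = (-b/a) * y + c/a := by
      intro y; field_simp; ring
    rw [Hfun]
    simp_rw [h]
    rw [intervalIntegral.integral_comp_mul_add Gfun (by simp [hb, ha] : -b/a ≠ 0) (c/a)]
    rw [integral_Gfun]
    simp only [smul_eq_mul]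
    have : -b / a * 1 + c / a = (c-b)/a := by field_simp; ring
    rw [this, mul_zero, zero_add, show ((-b/a)⁻¹ : ℝ) = -(a/b) by rw [inv_div, div_neg]]
    ring

lemma div_np {x y : ℝ} (hx : x ≤ 0) (hy : 0 ≤ y) : x / y ≤ 0 :=
  div_nonpos_of_nonpos_of_nonneg hx hy

lemma integral01_comp_sub (F : ℝ → ℝ) :
    (∫ y in (0:ℝ)..1, F (1 - y)) = ∫ y in (0:ℝ)..1, F y := by
  have := intervalIntegral.integral_comp_sub_left (a := (0:ℝ)) (b := (1:ℝ)) F 1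
  rw [show (1:ℝ)-1 = 0 by norm_num, show (1:ℝ)-0 = 1 by norm_num] at this
  exact this

lemma Hfun_neg_left (a b c : ℝ) : Hfun (-a) b c = Hfun a b (b - c) := by
  rw [Hfun, Hfun]
  rw [← integral01_comp_sub (fun y => Gfun ((b - c - b*y)/a))]
  apply intervalIntegral.integral_congr
  intro y _
  dsimp only
  rw [div_neg, ← neg_div]
  congr 1
  ring

lemma Hfun_neg_right (a b c : ℝ) : Hfun a (-b) c = Hfun a b (c + b) := by
  rw [Hfun, Hfun]
  rw [← integral01_comp_sub (fun y => Gfun ((c + b - b*y)/a))]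
  apply intervalIntegral.integral_congr
  intro y _
  dsimp only
  congr 1
  ring

lemma Hfun_refl_c {a : ℝ} (ha : a ≠ 0) (b c : ℝ) : Hfun a b (a + b - c) = Hfun a b c := by
  rw [Hfun, Hfun]
  rw [← integral01_comp_sub (fun y => Gfun ((a + b - c - b*y)/a))]
  apply intervalIntegral.integral_congr
  intro y _
  simp only
  rw [show (a + b - c - b*(1-y)) = a - (c - b*y) by ring, sub_div, div_self ha,
    ← Gfun_symm ((c - b*y)/a)]

noncomputable def Dfun (a b c : ℝ) : ℝ := Hfun a b c - Hfun b a c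

lemma Dfun_symm {a b : ℝ} (ha : a ≠ 0) (hb : b ≠ 0) (c : ℝ) :
    Dfun a b (a + b - c) = Dfun a b c := by
  rw [Dfun, Dfun, Hfun_refl_c ha, show a + b - c = b + a - c by ring, Hfun_refl_c hb]

lemma Dfun_eq {a b : ℝ} (ha : a ≠ 0) (hb : b ≠ 0) (c : ℝ) :
    Dfun a b c = (a/b) * (Ghat (c/a) - Ghat ((c-b)/a)) - (b/a) * (Ghat (c/b) - Ghat ((c-a)/b)) := by
  rw [Dfun, Hfun_eq a hb, Hfun_eq b ha]

lemma Dfun_base_zero₁ {a b c : ℝ} (ha : 0 < a) (hb : 0 < b) (hc : c ≤ 0) : Dfun a b c = 0 := by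
  rw [Dfun_eq ha.ne' hb.ne']
  rw [Ghat_of_nonpos (div_np hc ha.le),
    Ghat_of_nonpos (div_np (by linarith) ha.le),
    Ghat_of_nonpos (div_np hc hb.le),
    Ghat_of_nonpos (div_np (by linarith) hb.le)]
  ring

lemma Dfun_base_zero₂ {a b c : ℝ} (ha : 0 < a) (hb : 0 < b) (hc : a + b ≤ c) : Dfun a b c = 0 := by
  rw [Dfun_eq ha.ne' hb.ne']
  rw [Ghat_of_ge_one ((le_div_iff₀ ha).2 (by linarith)),
    Ghat_of_ge_one ((le_div_iff₀ ha).2 (by linarith)),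
    Ghat_of_ge_one ((le_div_iff₀ hb).2 (by linarith)),
    Ghat_of_ge_one ((le_div_iff₀ hb).2 (by linarith))]
  ring

lemma Dfun_base_formula₁ {a b c : ℝ} (hb : 0 < b) (hba : b ≤ a) (h0 : 0 ≤ c) (h1 : c ≤ b) :
    Dfun a b c = c^3*(a-b)/(3*a^2*b^2) := by
  have ha : 0 < a := lt_of_lt_of_le hb hba
  rw [Dfun_eq ha.ne' hb.ne']
  rw [Ghat_of_mem (div_nonneg h0 ha.le) ((div_le_one ha).2 (by linarith)),
    Ghat_of_nonpos (div_np (by linarith) ha.le),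
    Ghat_of_mem (div_nonneg h0 hb.le) ((div_le_one hb).2 (by linarith)),
    Ghat_of_nonpos (div_np (by linarith) hb.le)]
  field_simp
  ring

lemma Dfun_base_formula₂ {a b c : ℝ} (hb : 0 < b) (hba : b ≤ a) (h0 : b ≤ c) (h1 : c ≤ a) :
    Dfun a b c = (6*(c-b)*(a-c) + 2*b*(a-b))/(6*a^2) := by
  have ha : 0 < a := lt_of_lt_of_le hb hba
  rw [Dfun_eq ha.ne' hb.ne']
  rw [Ghat_of_mem (div_nonneg (by linarith) ha.le) ((div_le_one ha).2 (by linarith)),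
    Ghat_of_mem (div_nonneg (by linarith) ha.le) ((div_le_one ha).2 (by linarith)),
    Ghat_of_ge_one ((le_div_iff₀ hb).2 (by linarith)),
    Ghat_of_nonpos (div_np (by linarith) hb.le)]
  field_simp
  ring

lemma Dfun_base_nonneg {a b : ℝ} (hb : 0 < b) (hba : b ≤ a) (c : ℝ) : 0 ≤ Dfun a b c := by
  have ha : 0 < a := lt_of_lt_of_le hb hba
  have main : ∀ d : ℝ, d ≤ a → 0 ≤ Dfun a b d := by
    intro d hd
    rcases le_or_gt d 0 with h | h
    · rw [Dfun_base_zero₁ ha hb h]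
    · rcases le_or_gt d b with h' | h'
      · rw [Dfun_base_formula₁ hb hba h.le h']
        apply div_nonneg (mul_nonneg (pow_nonneg h.le 3) (sub_nonneg.2 hba)) (by positivity)
      · rw [Dfun_base_formula₂ hb hba h'.le hd]
        apply div_nonneg (by nlinarith) (by positivity)
  rcases le_or_gt c a with h | h
  · exact main c h
  · rw [← Dfun_symm ha.ne' hb.ne']
    exact main _ (by linarith)

lemma Dfun_base_pos {a b c : ℝ} (hb : 0 < b) (hba : b < a) (h0 : 0 < c) (h1 : c < a + b) :
    0 < Dfun a b c := by
  have ha : 0 < a := lt_trans hb hba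
  have main : ∀ d : ℝ, 0 < d → d ≤ a → 0 < Dfun a b d := by
    intro d hd0 hd
    rcases le_or_gt d b with h' | h'
    · rw [Dfun_base_formula₁ hb hba.le hd0.le h']
      apply div_pos (mul_pos (pow_pos hd0 3) (sub_pos.2 hba)) (by positivity)
    · rw [Dfun_base_formula₂ hb hba.le h'.le hd]
      apply div_pos (by nlinarith) (by positivity)
  rcases le_or_gt c a with h | h
  · exact main c h0 h
  · rw [← Dfun_symm ha.ne' hb.ne']
    exact main _ (by linarith) (by linarith)

lemma Dfun_id1 {a b : ℝ} (ha : a ≠ 0) (c : ℝ) : Dfun (-a) b c = Dfun a b (c + a) := by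
  rw [Dfun, Dfun, Hfun_neg_left, Hfun_neg_right,
    show b - c = a + b - (c + a) by ring, Hfun_refl_c ha]

lemma Dfun_id2 {a b : ℝ} (hb : b ≠ 0) (c : ℝ) : Dfun a (-b) c = Dfun a b (c + b) := by
  rw [Dfun, Dfun, Hfun_neg_right, Hfun_neg_left,
    show a - c = b + a - (c + b) by ring, Hfun_refl_c hb]

lemma Dfun_reduce {a b : ℝ} (ha : a ≠ 0) (hb : b ≠ 0) (c : ℝ) :
    Dfun a b c = Dfun |a| |b| (c - min a 0 - min b 0) := by
  rcases ha.lt_or_gt with ha' | ha' <;> rcases hb.lt_or_gt with hb' | hb'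
  · rw [abs_of_neg ha', abs_of_neg hb', min_eq_left ha'.le, min_eq_left hb'.le]
    rw [show a = -(-a) by ring] at ha ⊢
    rw [show b = -(-b) by ring] at hb ⊢
    rw [Dfun_id1 (neg_ne_zero.mp ha), Dfun_id2 (neg_ne_zero.mp hb)]
    ring_nf
  · rw [abs_of_neg ha', abs_of_pos hb', min_eq_left ha'.le, min_eq_right hb'.le]
    rw [show a = -(-a) by ring] at ha ⊢
    rw [Dfun_id1 (neg_ne_zero.mp ha)]
    ring_nf
  · rw [abs_of_pos ha', abs_of_neg hb', min_eq_right ha'.le, min_eq_left hb'.le]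
    rw [show b = -(-b) by ring] at hb ⊢
    rw [Dfun_id2 (neg_ne_zero.mp hb)]
    ring_nf
  · rw [abs_of_pos ha', abs_of_pos hb', min_eq_right ha'.le, min_eq_right hb'.le]
    ring_nf

lemma mm_abs (x : ℝ) : max x 0 - min x 0 = |x| := by
  rcases le_total x 0 with h | h
  · rw [max_eq_right h, min_eq_left h, abs_of_nonpos h]; ring
  · rw [max_eq_left h, min_eq_right h, abs_of_nonneg h]; ring

lemma Dfun_nonneg {a b : ℝ} (ha : a ≠ 0) (hb : b ≠ 0) (h : |b| ≤ |a|) (c : ℝ) :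
    0 ≤ Dfun a b c := by
  rw [Dfun_reduce ha hb]
  exact Dfun_base_nonneg (abs_pos.2 hb) h _

lemma Dfun_pos {a b c : ℝ} (ha : a ≠ 0) (hb : b ≠ 0) (h : |b| < |a|)
    (hc1 : min a 0 + min b 0 < c) (hc2 : c < max a 0 + max b 0) : 0 < Dfun a b c := by
  rw [Dfun_reduce ha hb]
  apply Dfun_base_pos (abs_pos.2 hb) h (by linarith)
  have h1 := mm_abs a
  have h2 := mm_abs b
  linarith

lemma Dfun_zero_of_abs_eq {a b : ℝ} (ha : a ≠ 0) (hb : b ≠ 0) (h : |a| = |b|) (c : ℝ) :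
    Dfun a b c = 0 := by
  rw [Dfun_reduce ha hb, h, Dfun, sub_self]

lemma continuous_Hfun_c {a b : ℝ} (hb : b ≠ 0) : Continuous (fun c => Hfun a b c) := by
  simp_rw [Hfun_eq a hb]
  exact continuous_const.mul
    ((continuous_Ghat.comp (continuous_id.div_const a)).sub
      (continuous_Ghat.comp ((continuous_id.sub continuous_const).div_const a)))

noncomputable def nuM : Measure ℝ := volume.restrict (Set.Icc 0 1)

instance : IsProbabilityMeasure nuM :=
  ⟨by rw [nuM, Measure.restrict_apply_univ, Real.volume_Icc]; norm_num⟩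

lemma restrict_cube (n : ℕ) :
    Measure.pi (fun _ : Fin n => nuM) = (volume : Measure (Fin n → ℝ)).restrict (unitCube n) := by
  refine Measure.pi_eq fun s hs => ?_
  rw [Measure.restrict_apply (MeasurableSet.univ_pi hs), unitCube, ← Set.pi_inter_distrib,
    volume_pi_pi]
  exact Finset.prod_congr rfl fun i _ => by rw [nuM, Measure.restrict_apply (hs i)]

lemma update_preimage {n : ℕ} (i : Fin n) (s : Fin n → Set ℝ) :
    (fun p : (Fin n → ℝ) × ℝ => Function.update p.1 i p.2) ⁻¹' (Set.pi Set.univ s)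
      = (Set.pi Set.univ (Function.update s i Set.univ)) ×ˢ (s i) := by
  ext ⟨x, t⟩
  simp only [Set.mem_preimage, Set.mem_univ_pi, Set.mem_prod]
  constructor
  · intro h
    refine ⟨fun k => ?_, ?_⟩
    · rcases eq_or_ne k i with rfl | hk
      · simp
      · have := h k
        rw [Function.update_of_ne hk] at this
        rw [Function.update_of_ne hk]
        exact this
    · have := h i
      rwa [Function.update_self] at this
  · rintro ⟨h1, h2⟩ k
    rcases eq_or_ne k i with rfl | hk
    · rwa [Function.update_self]
    · have := h1 k
      rw [Function.update_of_ne hk] at this ⊢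
      exact this

lemma measurePreserving_update' {n : ℕ} (i : Fin n) :
    MeasurePreserving (fun p : (Fin n → ℝ) × ℝ => Function.update p.1 i p.2)
      ((Measure.pi fun _ : Fin n => nuM).prod nuM) (Measure.pi fun _ : Fin n => nuM) := by
  refine ⟨measurable_update', ?_⟩
  refine (Measure.pi_eq fun s hs => ?_).symm
  rw [Measure.map_apply measurable_update' (MeasurableSet.univ_pi hs), update_preimage,
    Measure.prod_prod, Measure.pi_pi]
  have h : ∀ k, nuM (Function.update s i Set.univ k)
      = Function.update (fun k => nuM (s k)) i (nuM Set.univ) k := by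
    intro k
    rcases eq_or_ne k i with rfl | hk
    · simp
    · rw [Function.update_of_ne hk, Function.update_of_ne hk]
  rw [Finset.prod_congr rfl fun k _ => h k, Finset.prod_update_of_mem (Finset.mem_univ i),
    measure_univ, one_mul, mul_comm, ← Finset.mul_prod_erase Finset.univ _ (Finset.mem_univ i),
    Finset.erase_eq]

lemma integrable_of_bound {α : Type*} [MeasurableSpace α] {μ : Measure α} [IsFiniteMeasure μ]
    {f : α → ℝ} (hf : AEStronglyMeasurable f μ) (C : ℝ) (h : ∀ x, |f x| ≤ C) :
    Integrable f μ :=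
  Integrable.mono' (integrable_const C) hf (ae_of_all _ fun x => by simpa using h x)

lemma integral_update_avg {n : ℕ} (i : Fin n) {f : (Fin n → ℝ) → ℝ} (hf : Measurable f)
    (C : ℝ) (hbdd : ∀ x, |f x| ≤ C) :
    ∫ x, f x ∂(Measure.pi fun _ : Fin n => nuM)
      = ∫ x, (∫ t, f (Function.update x i t) ∂nuM) ∂(Measure.pi fun _ : Fin n => nuM) := by
  have hmp := measurePreserving_update' i
  have hint : Integrable (fun p : (Fin n → ℝ) × ℝ => f (Function.update p.1 i p.2))
      ((Measure.pi fun _ : Fin n => nuM).prod nuM) := by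
    refine integrable_of_bound ((hf.comp measurable_update').aestronglyMeasurable) C fun p => hbdd _
  calc ∫ x, f x ∂(Measure.pi fun _ : Fin n => nuM)
      = ∫ p, f (Function.update p.1 i p.2) ∂((Measure.pi fun _ : Fin n => nuM).prod nuM) := by
        conv_lhs => rw [← hmp.map_eq]
        exact integral_map hmp.measurable.aemeasurable
          (by rw [hmp.map_eq]; exact hf.aestronglyMeasurable)
    _ = ∫ x, (∫ t, f (Function.update x i t) ∂nuM) ∂(Measure.pi fun _ : Fin n => nuM) :=
        MeasureTheory.integral_prod _ hint

lemma clamp_of_ge_one {u : ℝ} (h : 1 ≤ u) : clamp u = 1 := by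
  rw [clamp, min_eq_left h, max_eq_right zero_le_one]

lemma clamp_one_sub (u : ℝ) : clamp (1 - u) = 1 - clamp u := by
  rcases le_total u 0 with h | h
  · rw [clamp_of_nonpos h, clamp_of_ge_one (by linarith)]; ring
  · rcases le_total u 1 with h' | h'
    · rw [clamp_of_mem h h', clamp_of_mem (by linarith) (by linarith)]
    · rw [clamp_of_ge_one h', clamp_of_nonpos (by linarith)]; ring

lemma measurable_ind (w' r : ℝ) : Measurable (fun t : ℝ => if r ≤ w'*t then (1:ℝ) else 0) :=
  Measurable.ite (measurableSet_le measurable_const (measurable_const.mul measurable_id))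
    measurable_const measurable_const

lemma ind_integral_pos {w' : ℝ} (hw' : 0 < w') (r : ℝ) :
    (∫ t, (if r ≤ w'*t then (1:ℝ) else 0) ∂nuM) = clamp (1 - r/w') := by
  have hind : (fun t : ℝ => if r ≤ w'*t then (1:ℝ) else 0)
      = Set.indicator {t : ℝ | r ≤ w'*t} (fun _ => (1:ℝ)) := by
    funext t; by_cases h : r ≤ w'*t <;> simp [Set.indicator, h]
  have hms : MeasurableSet {t : ℝ | r ≤ w'*t} :=
    measurableSet_le measurable_const (measurable_const.mul measurable_id)
  rw [hind, integral_indicator_const (1:ℝ) hms, smul_eq_mul, mul_one, nuM,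
    measureReal_def, Measure.restrict_apply hms]
  have hset : {t : ℝ | r ≤ w'*t} = Set.Ici (r/w') := by
    ext t
    simp only [Set.mem_setOf_eq, Set.mem_Ici]
    rw [div_le_iff₀ hw', mul_comm]
  have hset2 : Set.Ici (r/w') ∩ Set.Icc (0:ℝ) 1 = Set.Icc (max (r/w') 0) 1 := by
    ext t
    simp only [Set.mem_inter_iff, Set.mem_Ici, Set.mem_Icc, max_le_iff]
    tauto
  rw [hset, hset2, Real.volume_Icc, ENNReal.toReal_ofReal']
  rcases le_total (r/w') 0 with h | h
  · rw [max_eq_right h, clamp_of_ge_one (u := 1 - r/w') (by linarith)]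
    norm_num
  · rw [max_eq_left h]
    rcases le_total (r/w') 1 with h' | h'
    · rw [clamp_of_mem (by linarith) (by linarith), max_eq_left (by linarith)]
    · rw [clamp_of_nonpos (by linarith), max_eq_right (by linarith)]

lemma ind_integral_neg {w' : ℝ} (hw' : w' < 0) (r : ℝ) :
    (∫ t, (if r ≤ w'*t then (1:ℝ) else 0) ∂nuM) = clamp (r/w') := by
  have hind : (fun t : ℝ => if r ≤ w'*t then (1:ℝ) else 0)
      = Set.indicator {t : ℝ | r ≤ w'*t} (fun _ => (1:ℝ)) := by
    funext t; by_cases h : r ≤ w'*t <;> simp [Set.indicator, h]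
  have hms : MeasurableSet {t : ℝ | r ≤ w'*t} :=
    measurableSet_le measurable_const (measurable_const.mul measurable_id)
  rw [hind, integral_indicator_const (1:ℝ) hms, smul_eq_mul, mul_one, nuM,
    measureReal_def, Measure.restrict_apply hms]
  have hset : {t : ℝ | r ≤ w'*t} = Set.Iic (r/w') := by
    ext t
    simp only [Set.mem_setOf_eq, Set.mem_Iic]
    rw [le_div_iff_of_neg hw', mul_comm]
  have hset2 : Set.Iic (r/w') ∩ Set.Icc (0:ℝ) 1 = Set.Icc (0:ℝ) (min (r/w') 1) := by
    ext t
    simp only [Set.mem_inter_iff, Set.mem_Iic, Set.mem_Icc, le_min_iff]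
    tauto
  rw [hset, hset2, Real.volume_Icc, ENNReal.toReal_ofReal']
  rw [clamp, max_comm, min_comm, sub_zero]

lemma inner2 {w' : ℝ} (hw' : w' ≠ 0) (r : ℝ) :
    (∫ t, ∫ b, |(if r ≤ w'*b then (1:ℝ) else 0) - (if r ≤ w'*t then (1:ℝ) else 0)| ∂nuM ∂nuM)
      = 2 * Gfun (r/w') := by
  set g : ℝ → ℝ := fun t => if r ≤ w'*t then (1:ℝ) else 0 with hgdef
  have hgm := measurable_ind w' r
  have hgb : ∀ t, |g t| ≤ 1 := by
    intro t; rw [hgdef]; dsimp only; split <;> norm_num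
  have hgi : Integrable g nuM := integrable_of_bound hgm.aestronglyMeasurable 1 hgb
  set p : ℝ := ∫ t, g t ∂nuM with hpdef
  have habs : ∀ t b : ℝ, |g b - g t| = g b + g t - 2*(g t * g b) := by
    intro t b; rw [hgdef]; dsimp only; split <;> split <;> norm_num
  have key : ∀ t, (∫ b, |g b - g t| ∂nuM) = p + g t - 2*(g t * p) := by
    intro t
    simp_rw [habs t]
    have h1 : Integrable (fun b => g b + g t) nuM := hgi.add (integrable_const (g t))
    have h2 : Integrable (fun b => 2*(g t * g b)) nuM := (hgi.const_mul (g t)).const_mul 2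
    rw [integral_sub h1 h2, integral_add hgi (integrable_const (g t)), integral_const_mul,
      integral_const_mul, integral_const]
    simp [measure_univ]
    rfl
  have hstep : (∫ t, ∫ b, |g b - g t| ∂nuM ∂nuM) = 2 * (p * (1 - p)) := by
    simp_rw [key]
    have h3 : Integrable (fun t => p + g t) nuM := (integrable_const p).add hgi
    have h4 : Integrable (fun t => 2*(g t * p)) nuM := (hgi.mul_const p).const_mul 2
    rw [integral_sub h3 h4, integral_add (integrable_const p) hgi, integral_const_mul,
      integral_mul_const, integral_const]
    simp only [measure_univ, probReal_univ, ENNReal.toReal_one, one_smul, ← hpdef]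
    ring
  rw [hstep]
  have hppq : p * (1 - p) = Gfun (r/w') := by
    rcases hw'.lt_or_gt with hneg | hpos
    · have hp : p = clamp (r/w') := by rw [hpdef]; exact ind_integral_neg hneg r
      rw [hp, Gfun, clamp_one_sub]
    · have hp : p = clamp (1 - r/w') := by rw [hpdef]; exact ind_integral_pos hpos r
      rw [hp, clamp_one_sub, Gfun, clamp_one_sub]; ring
  rw [hppq]

lemma Gfun_le_one (u : ℝ) : Gfun u ≤ 1 :=
  mul_le_one₀ (clamp_le_one u) (clamp_nonneg _) (clamp_le_one _)

lemma abs_integral_le_nu {f : ℝ → ℝ} (C : ℝ) (h : ∀ b, |f b| ≤ C) : |∫ b, f b ∂nuM| ≤ C := by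
  have := norm_integral_le_of_norm_le_const (μ := nuM) (f := f) (C := C)
    (ae_of_all _ fun b => by simpa using h b)
  simpa [measure_univ] using this

lemma Hfun_nu (a b c : ℝ) : (∫ y, Gfun ((c - b*y)/a) ∂nuM) = Hfun a b c := by
  rw [Hfun, intervalIntegral.integral_of_le zero_le_one, nuM, ← integral_Icc_eq_integral_Ioc]

section ChiRed
variable {n : ℕ} (w : Fin n → ℝ) (q : ℝ)

lemma measurable_linClass : Measurable (linClass w q) := by
  unfold linClass
  exact Measurable.ite (measurableSet_le measurable_const (by fun_prop))
    measurable_const measurable_const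

lemma abs_linClass_le (x : Fin n → ℝ) : |linClass w q x| ≤ 1 := by
  unfold linClass; split <;> norm_num

lemma sum_update' (x : Fin n → ℝ) (i : Fin n) (t : ℝ) :
    ∑ k, w k * Function.update x i t k = (∑ k, w k * x k) - w i * x i + w i * t := by
  have h : ∀ k, w k * Function.update x i t k
      = Function.update (fun k => w k * x k) i (w i * t) k := by
    intro k; rcases eq_or_ne k i with rfl | hk
    · simp
    · rw [Function.update_of_ne hk, Function.update_of_ne hk]
  rw [Finset.sum_congr rfl fun k _ => h k, Finset.sum_update_of_mem (Finset.mem_univ i),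
    ← Finset.erase_eq, Finset.sum_erase_eq_sub (Finset.mem_univ i)]
  ring

lemma chi_repr1 (hw : ∀ k, w k ≠ 0) (i : Fin n) :
    chiLin w q i = ∫ x, 2 * Gfun ((q - ((∑ k, w k * x k) - w i * x i))/w i)
      ∂(Measure.pi fun _ : Fin n => nuM) := by
  have hLm := measurable_linClass w q
  unfold chiLin
  have hre : (volume : Measure ℝ).restrict (Set.Icc 0 1) = nuM := rfl
  rw [hre, show (volume : Measure (Fin n → ℝ)).restrict (unitCube n)
      = Measure.pi fun _ : Fin n => nuM from (restrict_cube n).symm]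
  have m1 : Measurable fun p : ℝ × (Fin n → ℝ) => Function.update p.2 i p.1 :=
    measurable_update'.comp (measurable_snd.prodMk measurable_fst)
  have hFm : Measurable fun p : ℝ × (Fin n → ℝ) =>
      |linClass w q (Function.update p.2 i p.1) - linClass w q p.2| :=
    ((hLm.comp m1).sub (hLm.comp measurable_snd)).abs
  have hFb : ∀ p : ℝ × (Fin n → ℝ),
      |(|linClass w q (Function.update p.2 i p.1) - linClass w q p.2|)| ≤ 2 := by
    intro p
    rw [abs_abs]
    calc |linClass w q (Function.update p.2 i p.1) - linClass w q p.2|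
        ≤ |linClass w q (Function.update p.2 i p.1)| + |linClass w q p.2| := abs_sub _ _
      _ ≤ 1 + 1 := add_le_add (abs_linClass_le w q _) (abs_linClass_le w q _)
      _ = 2 := by norm_num
  rw [integral_integral_swap (integrable_of_bound hFm.aestronglyMeasurable 2 hFb)]
  -- now: ∫ x ∂π, ∫ b ∂nuM, |linClass (update x i b) - linClass x|
  have hGm : Measurable fun p : (Fin n → ℝ) × ℝ =>
      |linClass w q (Function.update p.1 i p.2) - linClass w q p.1| :=
    ((hLm.comp measurable_update').sub (hLm.comp measurable_fst)).abs
  have hfm : Measurable fun x : Fin n → ℝ =>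
      ∫ b, |linClass w q (Function.update x i b) - linClass w q x| ∂nuM :=
    (hGm.stronglyMeasurable.integral_prod_right').measurable
  have hfb : ∀ x : Fin n → ℝ,
      |∫ b, |linClass w q (Function.update x i b) - linClass w q x| ∂nuM| ≤ 2 := by
    intro x
    refine abs_integral_le_nu 2 fun b => ?_
    rw [abs_abs]
    calc |linClass w q (Function.update x i b) - linClass w q x|
        ≤ |linClass w q (Function.update x i b)| + |linClass w q x| := abs_sub _ _
      _ ≤ 2 := by
          have := abs_linClass_le w q (Function.update x i b)
          have := abs_linClass_le w q x
          linarith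
  rw [integral_update_avg i hfm 2 hfb]
  refine integral_congr_ae (ae_of_all _ fun x => ?_)
  simp only [Function.update_idem]
  have hs : ∀ t, linClass w q (Function.update x i t)
      = if q - ((∑ k, w k * x k) - w i * x i) ≤ w i * t then (1:ℝ) else 0 := by
    intro t
    unfold linClass
    rw [sum_update' w x i t]
    exact if_congr (by constructor <;> intro <;> linarith) rfl rfl
  simp_rw [hs]
  exact inner2 (hw i) _

lemma chi_repr2 (hw : ∀ k, w k ≠ 0) (i j : Fin n) (hij : i ≠ j) :
    chiLin w q i = ∫ x, 2 * Hfun (w i) (w j)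
      (q - ((∑ k, w k * x k) - w i * x i - w j * x j))
      ∂(Measure.pi fun _ : Fin n => nuM) := by
  rw [chi_repr1 w q hw i]
  have hgm : Measurable fun x : Fin n → ℝ =>
      2 * Gfun ((q - ((∑ k, w k * x k) - w i * x i))/w i) := by
    have hc : Continuous fun x : Fin n → ℝ =>
        2 * Gfun ((q - ((∑ k, w k * x k) - w i * x i))/w i) := by
      apply continuous_const.mul
      apply continuous_Gfun.comp
      apply Continuous.div_const
      apply continuous_const.sub
      exact ((continuous_finset_sum _ fun k _ => continuous_const.mul (continuous_apply k)).sub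
        (continuous_const.mul (continuous_apply i)))
    exact hc.measurable
  have hgb : ∀ x : Fin n → ℝ,
      |2 * Gfun ((q - ((∑ k, w k * x k) - w i * x i))/w i)| ≤ 2 := by
    intro x
    rw [abs_mul, abs_two, abs_of_nonneg (Gfun_nonneg _)]
    have := Gfun_le_one ((q - ((∑ k, w k * x k) - w i * x i))/w i)
    linarith
  rw [integral_update_avg j hgm 2 hgb]
  refine integral_congr_ae (ae_of_all _ fun x => ?_)
  have hcoord : ∀ t : ℝ, Function.update x j t i = x i := fun t => Function.update_of_ne hij t x
  have harg : ∀ t : ℝ,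
      (q - ((∑ k, w k * Function.update x j t k) - w i * Function.update x j t i))/w i
      = ((q - ((∑ k, w k * x k) - w i * x i - w j * x j)) - w j * t)/w i := by
    intro t
    rw [sum_update' w x j t, hcoord t]
    congr 1
    ring
  simp_rw [harg]
  rw [integral_const_mul, Hfun_nu]

end ChiRed

lemma abs_Hfun_le (a b c : ℝ) : |Hfun a b c| ≤ 1 := by
  rw [← Hfun_nu]
  exact abs_integral_le_nu 1 fun y => by
    rw [abs_of_nonneg (Gfun_nonneg _)]; exact Gfun_le_one _

lemma abs_Dfun_le (a b c : ℝ) : |Dfun a b c| ≤ 2 := by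
  rw [Dfun]
  calc |Hfun a b c - Hfun b a c| ≤ |Hfun a b c| + |Hfun b a c| := abs_sub _ _
    _ ≤ 2 := by have := abs_Hfun_le a b c; have := abs_Hfun_le b a c; linarith

section Final
variable {n : ℕ} (w : Fin n → ℝ) (q : ℝ)

lemma sum_split (i j : Fin n) (hij : i ≠ j) (f : Fin n → ℝ) :
    ∑ k, f k = f i + f j + ∑ k ∈ (Finset.univ.erase i).erase j, f k := by
  rw [← Finset.add_sum_erase _ f (Finset.mem_univ i),
    ← Finset.add_sum_erase _ f (Finset.mem_erase.2 ⟨hij.symm, Finset.mem_univ j⟩)]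
  ring

lemma filter_neg_sum : ∑ k ∈ Finset.univ.filter (fun k => w k < 0), w k = ∑ k, min (w k) 0 := by
  rw [Finset.sum_filter]
  refine Finset.sum_congr rfl fun k _ => ?_
  split_ifs with h
  · exact (min_eq_left h.le).symm
  · exact (min_eq_right (le_of_not_gt h)).symm

lemma filter_pos_sum : ∑ k ∈ Finset.univ.filter (fun k => 0 < w k), w k = ∑ k, max (w k) 0 := by
  rw [Finset.sum_filter]
  refine Finset.sum_congr rfl fun k _ => ?_
  split_ifs with h
  · exact (max_eq_left h.le).symm
  · exact (max_eq_right (le_of_not_gt h)).symm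

lemma chi_eq_of_abs_eq (hw : ∀ k, w k ≠ 0) (i j : Fin n) (hij : i ≠ j)
    (habs : |w i| = |w j|) : chiLin w q i = chiLin w q j := by
  rw [chi_repr2 w q hw i j hij, chi_repr2 w q hw j i hij.symm]
  refine integral_congr_ae (ae_of_all _ fun x => ?_)
  dsimp only
  have e : q - ((∑ k, w k * x k) - w j * x j - w i * x i)
      = q - ((∑ k, w k * x k) - w i * x i - w j * x j) := by ring
  rw [e]
  have := Dfun_zero_of_abs_eq (hw i) (hw j) habs
    (q - ((∑ k, w k * x k) - w i * x i - w j * x j))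
  rw [Dfun] at this
  linarith

lemma chi_lt (hw : ∀ k, w k ≠ 0)
    (hq₁ : ∑ k ∈ Finset.univ.filter (fun k => w k < 0), w k < q)
    (hq₂ : q < ∑ k ∈ Finset.univ.filter (fun k => 0 < w k), w k)
    (i j : Fin n) (hij : i ≠ j) (habs : |w j| < |w i|) :
    chiLin w q j < chiLin w q i := by
  have ha := hw i
  have hb := hw j
  set s : Finset (Fin n) := (Finset.univ.erase i).erase j with hs
  set c : (Fin n → ℝ) → ℝ := fun x => q - ∑ k ∈ s, w k * x k with hc
  have hccont : Continuous c :=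
    continuous_const.sub (continuous_finset_sum _ fun k _ => continuous_const.mul (continuous_apply k))
  set φ : (Fin n → ℝ) → ℝ := fun x => 2 * Dfun (w i) (w j) (c x) with hφ
  have hφcont : Continuous φ := by
    rw [hφ]
    exact continuous_const.mul
      (((continuous_Hfun_c hb).sub (continuous_Hfun_c ha)).comp hccont)
  have hφb : ∀ x, |φ x| ≤ 4 := by
    intro x
    rw [hφ]; dsimp only
    rw [abs_mul, abs_two]
    have := abs_Dfun_le (w i) (w j) (c x)
    linarith
  have hφnn : ∀ x, 0 ≤ φ x := by
    intro x
    rw [hφ]; dsimp only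
    have := Dfun_nonneg ha hb habs.le (c x)
    linarith
  -- representation of the difference
  have hcsum : ∀ x : Fin n → ℝ,
      q - ((∑ k, w k * x k) - w i * x i - w j * x j) = c x := by
    intro x
    rw [hc]; dsimp only
    rw [sum_split i j hij (fun k => w k * x k)]
    ring
  have hHint : ∀ (a' b' : ℝ), b' ≠ 0 → Integrable
      (fun x : Fin n → ℝ => 2 * Hfun a' b' (c x)) (Measure.pi fun _ : Fin n => nuM) := by
    intro a' b' hb'
    refine integrable_of_bound ((continuous_const.mul
      ((continuous_Hfun_c hb').comp hccont)).measurable.aestronglyMeasurable) 2 fun x => ?_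
    rw [abs_mul, abs_two]
    have := abs_Hfun_le a' b' (c x)
    linarith
  have hrepr : chiLin w q i - chiLin w q j
      = ∫ x, φ x ∂(Measure.pi fun _ : Fin n => nuM) := by
    rw [chi_repr2 w q hw i j hij, chi_repr2 w q hw j i hij.symm]
    have e1 : ∀ x : Fin n → ℝ, q - ((∑ k, w k * x k) - w j * x j - w i * x i)
        = c x := by
      intro x; rw [← hcsum x]; ring
    simp_rw [e1, hcsum]
    rw [← integral_sub (hHint (w i) (w j) hb) (hHint (w j) (w i) ha)]
    refine integral_congr_ae (ae_of_all _ fun x => ?_)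
    rw [hφ]; dsimp only; rw [Dfun]; ring
  -- set up P, N and nondegeneracy bounds
  set P := ∑ k ∈ s, max (w k) 0 with hP
  set N := ∑ k ∈ s, min (w k) 0 with hN
  have hN0 : N ≤ 0 := Finset.sum_nonpos fun k _ => min_le_right _ _
  have hP0 : 0 ≤ P := Finset.sum_nonneg fun k _ => le_max_right _ _
  have hm : min (w i) 0 + min (w j) 0 + N < q := by
    rw [filter_neg_sum w, sum_split i j hij (fun k => min (w k) 0)] at hq₁
    exact hq₁
  have hM : q < max (w i) 0 + max (w j) 0 + P := by
    rw [filter_pos_sum w, sum_split i j hij (fun k => max (w k) 0)] at hq₂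
    exact hq₂
  have habsum : min (w i) 0 + min (w j) 0 < max (w i) 0 + max (w j) 0 := by
    have h1 := mm_abs (w i)
    have h2 := mm_abs (w j)
    have h3 : 0 < |w i| := lt_of_le_of_lt (abs_nonneg (w j)) habs
    have h4 : 0 ≤ |w j| := abs_nonneg (w j)
    linarith
  -- find θ
  obtain ⟨θ, hθ0, hθ1, hγ1, hγ2⟩ : ∃ θ : ℝ, 0 < θ ∧ θ < 1 ∧
      min (w i) 0 + min (w j) 0 < q - (θ*P + (1-θ)*N) ∧
      q - (θ*P + (1-θ)*N) < max (w i) 0 + max (w j) 0 := by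
    rcases eq_or_lt_of_le (hN0.trans hP0) with hPN | hPN
    · have hNz : N = 0 := le_antisymm hN0 (by rw [hPN]; exact hP0)
      have hPz : P = 0 := by rw [← hPN]; exact hNz
      refine ⟨1/2, by norm_num, by norm_num, ?_, ?_⟩
      · have hm' := hm
        rw [hNz] at hm'
        rw [hNz, hPz]
        linarith
      · have hM' := hM
        rw [hPz] at hM'
        rw [hNz, hPz]
        linarith
    · set lo := max (min (w i) 0 + min (w j) 0) (q - P) with hlo
      set hi := min (max (w i) 0 + max (w j) 0) (q - N) with hhi
      have hlohi : lo < hi := by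
        have c2 : min (w i) 0 + min (w j) 0 < q - N := by linarith
        have c3 : q - P < max (w i) 0 + max (w j) 0 := by linarith
        have c4 : q - P < q - N := by linarith
        exact max_lt (lt_min habsum c2) (lt_min c3 c4)
      set γ := (lo + hi)/2 with hγ
      have hγlo : lo < γ := by rw [hγ]; linarith
      have hγhi : γ < hi := by rw [hγ]; linarith
      have hval : (q - N - γ)/(P - N)*P + (1-(q - N - γ)/(P - N))*N = q - γ := by
        have hPN' : P - N ≠ 0 := sub_ne_zero.2 (ne_of_gt hPN)
        field_simp
        ring
      have hhi1 : hi ≤ q - N := min_le_right _ _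
      have hhi2 : hi ≤ max (w i) 0 + max (w j) 0 := min_le_left _ _
      have hlo1 : q - P ≤ lo := le_max_right _ _
      have hlo2 : min (w i) 0 + min (w j) 0 ≤ lo := le_max_left _ _
      refine ⟨(q - N - γ)/(P - N), div_pos (by linarith) (by linarith), ?_, ?_, ?_⟩
      · rw [div_lt_one (by linarith)]
        linarith
      · rw [hval]
        linarith
      · rw [hval]
        linarith
  -- the positivity point
  set x₀ : Fin n → ℝ := fun k => if k = i ∨ k = j then (1/2 : ℝ)
    else if 0 < w k then θ else 1 - θ with hx₀
  have hcx₀ : c x₀ = q - (θ*P + (1-θ)*N) := by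
    rw [hc]; dsimp only
    congr 1
    rw [hP, hN, Finset.mul_sum, Finset.mul_sum, ← Finset.sum_add_distrib]
    refine Finset.sum_congr rfl fun k hk => ?_
    obtain ⟨hkj, hki, -⟩ : k ≠ j ∧ k ≠ i ∧ k ∈ Finset.univ := by
      have h1 := Finset.mem_erase.1 hk
      have h2 := Finset.mem_erase.1 h1.2
      exact ⟨h1.1, h2.1, h2.2⟩
    rw [hx₀]; dsimp only
    rw [if_neg (by push_neg; exact ⟨hki, hkj⟩)]
    rcases (hw k).lt_or_gt with hneg | hpos
    · rw [if_neg (not_lt.2 hneg.le), max_eq_right hneg.le, min_eq_left hneg.le]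
      ring
    · rw [if_pos hpos, max_eq_left hpos.le, min_eq_right hpos.le]
      ring
  have hδ : 0 < φ x₀ := by
    rw [hφ]; dsimp only
    rw [hcx₀]
    have := Dfun_pos ha hb habs hγ1 hγ2
    linarith
  obtain ⟨ε, hε, hball⟩ : ∃ ε > 0, ∀ y, dist y x₀ < ε → φ x₀ / 2 < φ y := by
    obtain ⟨ε, hε, h⟩ := Metric.continuousAt_iff.1 hφcont.continuousAt (φ x₀/2) (by linarith)
    refine ⟨ε, hε, fun y hy => ?_⟩
    have h2 := h hy
    rw [Real.dist_eq] at h2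
    have := abs_lt.1 h2
    linarith
  set ρ : ℝ := min (min θ (1-θ)) (1/2) with hρdef
  have hρ : 0 < ρ := lt_min (lt_min hθ0 (by linarith)) (by norm_num)
  have hmargin : ∀ k, ρ ≤ x₀ k ∧ x₀ k ≤ 1 - ρ := by
    intro k
    have hρ1 : ρ ≤ θ := (min_le_left _ _).trans (min_le_left _ _)
    have hρ2 : ρ ≤ 1 - θ := (min_le_left _ _).trans (min_le_right _ _)
    have hρ3 : ρ ≤ 1/2 := min_le_right _ _
    rw [hx₀]; dsimp only
    split_ifs
    · constructor <;> linarith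
    · constructor <;> linarith
    · constructor <;> linarith
  set r := min (ε/2) ρ with hrdef
  have hr : 0 < r := lt_min (by linarith) hρ
  have hrρ : r ≤ ρ := min_le_right _ _
  have hsub : Metric.ball x₀ r ⊆ unitCube n := by
    intro y hy
    rw [Metric.mem_ball] at hy
    intro k _
    have hdk : dist (y k) (x₀ k) ≤ dist y x₀ := dist_le_pi_dist y x₀ k
    have habs' : |y k - x₀ k| < r := by
      rw [← Real.dist_eq]; exact lt_of_le_of_lt hdk hy
    have h1 := (hmargin k).1
    have h2 := (hmargin k).2
    have h3 := abs_lt.1 habs'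
    constructor <;> [linarith; linarith]
  have hφball : ∀ y ∈ Metric.ball x₀ r, φ x₀/2 ≤ φ y := by
    intro y hy
    rw [Metric.mem_ball] at hy
    exact (hball y (lt_of_lt_of_le hy ((min_le_left _ _).trans (by linarith)))).le
  -- conclude positivity
  have hπ : (Measure.pi fun _ : Fin n => nuM) = volume.restrict (unitCube n) := restrict_cube n
  have hint : Integrable φ (Measure.pi fun _ : Fin n => nuM) :=
    integrable_of_bound hφcont.measurable.aestronglyMeasurable 4 hφb
  have hintcube : IntegrableOn φ (unitCube n) volume := by
    rw [IntegrableOn, ← hπ]; exact hint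
  have hballfin : volume (Metric.ball x₀ r) ≠ ⊤ := measure_ball_lt_top.ne
  have hintball : IntegrableOn φ (Metric.ball x₀ r) volume := by
    have : IsFiniteMeasure (volume.restrict (Metric.ball x₀ r)) :=
      ⟨by rw [Measure.restrict_apply_univ]; exact measure_ball_lt_top⟩
    exact integrable_of_bound hφcont.measurable.aestronglyMeasurable 4 hφb
  have hpos : 0 < ∫ x, φ x ∂(Measure.pi fun _ : Fin n => nuM) := by
    have step1 : (φ x₀/2) * (volume (Metric.ball x₀ r)).toReal
        ≤ ∫ x in Metric.ball x₀ r, φ x := by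
      have := setIntegral_ge_of_const_le measurableSet_ball hballfin hφball hintball
      rw [smul_eq_mul, measureReal_def] at this
      linarith
    have step2 : (∫ x in Metric.ball x₀ r, φ x) ≤ ∫ x in unitCube n, φ x := by
      refine setIntegral_mono_set hintcube (ae_of_all _ hφnn) (HasSubset.Subset.eventuallyLE hsub)
    have hballpos : 0 < (volume (Metric.ball x₀ r)).toReal :=
      ENNReal.toReal_pos (Metric.measure_ball_pos volume x₀ hr).ne' hballfin
    have : 0 < (φ x₀/2) * (volume (Metric.ball x₀ r)).toReal :=
      mul_pos (by linarith) hballpos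
    have heq : (∫ x in unitCube n, φ x) = ∫ x, φ x ∂(Measure.pi fun _ : Fin n => nuM) := by
      rw [hπ]
    linarith
  linarith [hrepr, hpos]

end Final


/-- For a non-degenerate linear classifier, χ_i ≥ χ_j iff
|w_i| ≥ |w_j|. -/
theorem chiLin_ge_iff_abs_weight_ge
    {n : ℕ} (hn : 1 ≤ n) (w : Fin n → ℝ) (q : ℝ)
    (hw : ∀ k, w k ≠ 0)
    (hq₁ : ∑ k ∈ Finset.univ.filter (fun k => w k < 0), w k < q)
    (hq₂ : q < ∑ k ∈ Finset.univ.filter (fun k => 0 < w k), w k)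
    (i j : Fin n) :
    chiLin w q i ≥ chiLin w q j ↔ |w i| ≥ |w j| := by
  rcases eq_or_ne i j with rfl | hij
  · simp
  · rcases lt_trichotomy |w i| |w j| with h | h | h
    · have hlt := chi_lt w q hw hq₁ hq₂ j i hij.symm h
      constructor
      · intro h'
        exfalso
        rw [ge_iff_le] at h'
        linarith
      · intro h'
        exfalso
        rw [ge_iff_le] at h'
        linarith
    · have heq := chi_eq_of_abs_eq w q hw i j hij h
      constructor
      · intro _; exact h.ge
      · intro _; exact heq.ge
    · have hlt := chi_lt w q hw hq₁ hq₂ i j hij h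
      constructor
      · intro _; exact le_of_lt h
      · intro _; exact hlt.le
end

section
/- Let v be a linear classifier on [0,1]^n with weights w and threshold q, and suppose w_i > w_j > 0. If x ∈ Piv_j(b) \ Piv_i(b) for some b ∈ [0,1], then x_i > x_j. -/
open MeasureTheory

/-- Piv_i(b): points of the cube that are losing but become winning when
coordinate i is set to b. -/
noncomputable def pivSet {n : ℕ} (w : Fin n → ℝ) (q : ℝ) (i : Fin n) (b : ℝ) :
    Set (Fin n → ℝ) :=
  {x | x ∈ unitCube n ∧ linClass w q x = 0 ∧
    linClass w q (Function.update x i b) = 1}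

lemma sum_update_mul {n : ℕ} (w x : Fin n → ℝ) (i : Fin n) (b : ℝ) :
    ∑ k, w k * Function.update x i b k = (∑ k, w k * x k) + w i * (b - x i) := by
  rw [← Finset.sum_erase_add _ _ (Finset.mem_univ i),
    ← Finset.sum_erase_add (f := fun k => w k * x k) Finset.univ (Finset.mem_univ i)]
  have : ∑ k ∈ Finset.univ.erase i, w k * Function.update x i b k
      = ∑ k ∈ Finset.univ.erase i, w k * x k := by
    refine Finset.sum_congr rfl fun k hk => ?_
    rw [Function.update_of_ne (Finset.ne_of_mem_erase hk)]
  rw [this, Function.update_self]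
  ring

/-- If w_i > w_j > 0 and x ∈ Piv_j(b) \ Piv_i(b), then x_i > x_j. -/
theorem pivSet_diff_coord_gt
    {n : ℕ} (hn : 1 ≤ n) (w : Fin n → ℝ) (q : ℝ) (hw : ∀ k, w k ≠ 0)
    (i j : Fin n) (hij : w j < w i) (hj : 0 < w j)
    (b : ℝ) (hb : b ∈ Set.Icc (0 : ℝ) 1)
    (x : Fin n → ℝ) (hx : x ∈ pivSet w q j b) (hx' : x ∉ pivSet w q i b) :
    x j < x i := by
  obtain ⟨hcube, h0, h1⟩ := hx
  set S := ∑ k, w k * x k with hS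
  have hSlt : S < q := by
    by_contra h
    simp [linClass, ← hS, not_lt.mp h] at h0
  have hjq : q ≤ S + w j * (b - x j) := by
    by_contra h
    simp [linClass, sum_update_mul, ← hS, h] at h1
  have hiq : S + w i * (b - x i) < q := by
    by_contra h
    exact hx' ⟨hcube, h0, by simp [linClass, sum_update_mul, ← hS, not_lt.mp h]⟩
  have hbj : 0 < b - x j := by
    nlinarith
  have h1 : w i * (b - x i) < w j * (b - x j) := by linarith
  have h2 : w j * (b - x j) ≤ w i * (b - x j) := by nlinarith
  have : w i * (b - x i) < w i * (b - x j) := lt_of_lt_of_le h1 h2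
  have hi : 0 < w i := lt_trans hj hij
  nlinarith
end

section
/- Let v be a linear classifier on [0,1]^n with weights w and threshold q, and suppose w_i > w_j > 0. If x ∈ Piv_j(b) \ Piv_i(b) for some b ∈ [0,1], then f_ij(x) ∉ Piv_j(b) ∪ APiv_j(b). -/
open MeasureTheory

/-- APiv_i(b): points of the cube that are winning but become losing when
coordinate i is set to b. -/
noncomputable def apivSet {n : ℕ} (w : Fin n → ℝ) (q : ℝ) (i : Fin n) (b : ℝ) :
    Set (Fin n → ℝ) :=
  {x | x ∈ unitCube n ∧ linClass w q x = 1 ∧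
    linClass w q (Function.update x i b) = 0}

/-- The map f_ij swapping coordinates i and j. -/
def swapCoords {n : ℕ} (i j : Fin n) (x : Fin n → ℝ) : Fin n → ℝ :=
  x ∘ Equiv.swap i j


lemma sum_swap_mul {n : ℕ} (w x : Fin n → ℝ) (i j : Fin n) (hne : i ≠ j) :
    ∑ k, w k * (x ∘ Equiv.swap i j) k
      = (∑ k, w k * x k) - w i * x i - w j * x j + w i * x j + w j * x i := by
  have h1 : ∑ k, w k * (x ∘ Equiv.swap i j) k = ∑ k, w (Equiv.swap i j k) * x k :=
    Fintype.sum_equiv (Equiv.swap i j) _ _ (by intro k; simp)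
  have key : ∀ f : Fin n → ℝ, ∑ k, f k = ∑ k ∈ Finset.univ \ {i, j}, f k + (f i + f j) := by
    intro f
    rw [← Finset.sum_pair hne, Finset.sum_sdiff (Finset.subset_univ _)]
  rw [h1, key (fun k => w (Equiv.swap i j k) * x k), key (fun k => w k * x k)]
  have hcong : ∑ k ∈ Finset.univ \ {i, j}, w (Equiv.swap i j k) * x k
      = ∑ k ∈ Finset.univ \ {i, j}, w k * x k := by
    apply Finset.sum_congr rfl
    intro k hk
    simp only [Finset.mem_sdiff, Finset.mem_insert, Finset.mem_singleton] at hk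
    rw [Equiv.swap_apply_of_ne_of_ne (by tauto) (by tauto)]
  rw [hcong, Equiv.swap_apply_left, Equiv.swap_apply_right]
  ring

/-- If w_i > w_j > 0 and x ∈ Piv_j(b) \ Piv_i(b), then
f_ij(x) ∉ Piv_j(b) ∪ APiv_j(b). -/
theorem swap_not_piv_apiv
    {n : ℕ} (hn : 1 ≤ n) (w : Fin n → ℝ) (q : ℝ) (hw : ∀ k, w k ≠ 0)
    (i j : Fin n) (hij : w j < w i) (hj : 0 < w j)
    (b : ℝ) (hb : b ∈ Set.Icc (0 : ℝ) 1)
    (x : Fin n → ℝ) (hx : x ∈ pivSet w q j b) (hx' : x ∉ pivSet w q i b) :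
    swapCoords i j x ∉ pivSet w q j b ∪ apivSet w q j b := by
  have hne : i ≠ j := fun h => absurd hij (by rw [h]; exact lt_irrefl _)
  obtain ⟨hcube, hx0, hx1⟩ := hx
  set S := ∑ k, w k * x k with hSdef
  have hS : S < q := by
    by_contra h
    push_neg at h
    simp [linClass, if_pos h, ← hSdef] at hx0
  have hB : q ≤ S + w j * (b - x j) := by
    by_contra h
    push_neg at h
    rw [← sum_update_mul] at h
    simp [linClass, if_neg (not_le.mpr h)] at hx1
  have hA : S + w i * (b - x i) < q := by
    by_contra h
    push_neg at h
    rw [← sum_update_mul] at h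
    exact hx' ⟨hcube, hx0, by simp [linClass, if_pos h]⟩
  have hbj : x j < b := by nlinarith
  have hji : x j < x i := by nlinarith
  set y := swapCoords i j x with hy
  have hTy : ∑ k, w k * y k = S - w i * x i - w j * x j + w i * x j + w j * x i :=
    sum_swap_mul w x i j hne
  have hyj : y j = x i := by simp [hy, swapCoords]
  have hT2 : ∑ k, w k * Function.update y j b k
      = (S - w i * x i - w j * x j + w i * x j + w j * x i) + w j * (b - x i) := by
    rw [sum_update_mul, hTy, hyj]
  have h1 : ∑ k, w k * y k < q := by rw [hTy]; nlinarith
  have h2 : ∑ k, w k * Function.update y j b k < q := by rw [hT2]; nlinarith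
  rintro (⟨_, _, hc⟩ | ⟨_, hc, _⟩)
  · simp [linClass, if_neg (not_le.mpr h2)] at hc
  · simp [linClass, if_neg (not_le.mpr h1)] at hc
end
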